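/- Let T be a very generic tetrahedron of flags with edge coordinates z_{ij} and let T* be its dual with edge coordinates z*_{ij}. Then for every partition {i,j,k,l} = {1,2,3,4}, one has z*_{ij} z*_{ji} = z_{kl} z_{lk}. -/

import Mathlib

/-- Pairing of a covector and a vector in `ℂ³`. -/
noncomputable def dot (f x : Fin 3 → ℂ) : ℂ := ∑ t, f t * x t

/-- Determinant of three vectors of `ℂ³` (as rows). -/
noncomputable def det3 (a b c : Fin 3 → ℂ) : ℂ := Matrix.det (Matrix.of ![a, b, c])

/-- A generic tetrahedron of flags in `ℂP²`: four points `[xᵢ]` and four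
lines `[fᵢ]` with `fᵢ(xᵢ) = 0`, `fᵢ(xⱼ) ≠ 0` for `i ≠ j`, and no three of
the points collinear. -/
structure FlagTetra where
  x : Fin 4 → Fin 3 → ℂ
  f : Fin 4 → Fin 3 → ℂ
  flag : ∀ i, dot (f i) (x i) = 0
  generic_pairing : ∀ i j, i ≠ j → dot (f i) (x j) ≠ 0
  generic_pts : ∀ i j k : Fin 4, i ≠ j → j ≠ k → i ≠ k → det3 (x i) (x j) (x k) ≠ 0

/-- A very generic tetrahedron of flags: in addition no three of the
lines `[fᵢ]` are concurrent. -/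
structure VGTetra extends FlagTetra where
  generic_lines : ∀ i j k : Fin 4, i ≠ j → j ≠ k → i ≠ k → det3 (f i) (f j) (f k) ≠ 0

/-- The edge coordinate `z_{ij}(T)`, computed with respect to an even
permutation `(i,j,k,l)` of the vertices:
`z_{ij} = (fᵢ(x_k)·det(xᵢ,xⱼ,x_l)) / (fᵢ(x_l)·det(xᵢ,xⱼ,x_k))`. -/
noncomputable def zEdge (T : FlagTetra) (i j k l : Fin 4) : ℂ :=
  (dot (T.f i) (T.x k) * det3 (T.x i) (T.x j) (T.x l)) /
    (dot (T.f i) (T.x l) * det3 (T.x i) (T.x j) (T.x k))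

/-- The face coordinate (triple ratio) `z_{ijk}(T)`. -/
noncomputable def zFace (T : FlagTetra) (i j k : Fin 4) : ℂ :=
  (dot (T.f i) (T.x j) * dot (T.f j) (T.x k) * dot (T.f k) (T.x i)) /
    (dot (T.f i) (T.x k) * dot (T.f j) (T.x i) * dot (T.f k) (T.x j))

/-- The edge coordinate `z*_{ij}` of the dual tetrahedron `T*`, obtained by
replacing each flag `([x],[f])` by `([f],[x])` in the dual projective plane. -/
noncomputable def zEdgeDual (T : FlagTetra) (i j k l : Fin 4) : ℂ :=
  (dot (T.f k) (T.x i) * det3 (T.f i) (T.f j) (T.f l)) /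
    (dot (T.f l) (T.x i) * det3 (T.f i) (T.f j) (T.f k))

lemma det3_swap (a b c : Fin 3 → ℂ) : det3 b a c = -det3 a b c := by
  simp [det3, Matrix.det_fin_three]; ring

lemma cauchy_binet (A B C X Y Z : Fin 3 → ℂ) :
    det3 A B C * det3 X Y Z =
      dot A X * (dot B Y * dot C Z - dot B Z * dot C Y)
      - dot A Y * (dot B X * dot C Z - dot B Z * dot C X)
      + dot A Z * (dot B X * dot C Y - dot B Y * dot C X) := by
  simp [det3, dot, Matrix.det_fin_three, Fin.sum_univ_three]; ring

lemma key (T : FlagTetra) (a b c : Fin 4) :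
    det3 (T.f a) (T.f b) (T.f c) * det3 (T.x a) (T.x b) (T.x c) =
      dot (T.f a) (T.x b) * dot (T.f b) (T.x c) * dot (T.f c) (T.x a)
      + dot (T.f a) (T.x c) * dot (T.f b) (T.x a) * dot (T.f c) (T.x b) := by
  rw [cauchy_binet, T.flag a, T.flag b, T.flag c]; ring


/-- For a very generic tetrahedron of flags and its dual,
`z*_{ij} z*_{ji} = z_{kl} z_{lk}` for every partition `{i,j,k,l}` of the
four vertices. -/
theorem zEdgeDual_mul (T : VGTetra) (σ : Equiv.Perm (Fin 4)) (hσ : σ.sign = 1) :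
    zEdgeDual T.toFlagTetra (σ 0) (σ 1) (σ 2) (σ 3) *
      zEdgeDual T.toFlagTetra (σ 1) (σ 0) (σ 3) (σ 2) =
    zEdge T.toFlagTetra (σ 2) (σ 3) (σ 0) (σ 1) *
      zEdge T.toFlagTetra (σ 3) (σ 2) (σ 1) (σ 0) := by
  set i := σ 0 with hi
  set j := σ 1 with hj
  set k := σ 2 with hk
  set l := σ 3 with hl
  have hne : ∀ a b : Fin 4, a ≠ b → σ a ≠ σ b := fun a b h => σ.injective.ne h
  have hij : i ≠ j := hne 0 1 (by decide)
  have hik : i ≠ k := hne 0 2 (by decide)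
  have hil : i ≠ l := hne 0 3 (by decide)
  have hjk : j ≠ k := hne 1 2 (by decide)
  have hjl : j ≠ l := hne 1 3 (by decide)
  have hkl : k ≠ l := hne 2 3 (by decide)
  have T' := T.toFlagTetra
  -- nonvanishing of the relevant point determinants
  have hDijk : det3 (T.toFlagTetra.x i) (T.toFlagTetra.x j) (T.toFlagTetra.x k) ≠ 0 :=
    T.generic_pts i j k hij hjk hik
  have hDijl : det3 (T.toFlagTetra.x i) (T.toFlagTetra.x j) (T.toFlagTetra.x l) ≠ 0 :=
    T.generic_pts i j l hij hjl hil
  have hDkli : det3 (T.toFlagTetra.x k) (T.toFlagTetra.x l) (T.toFlagTetra.x i) ≠ 0 :=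
    T.generic_pts k l i hkl hil.symm hik.symm
  have hDklj : det3 (T.toFlagTetra.x k) (T.toFlagTetra.x l) (T.toFlagTetra.x j) ≠ 0 :=
    T.generic_pts k l j hkl hjl.symm hjk.symm
  -- express the covector determinants through the key identity
  have e1 : det3 (T.toFlagTetra.f i) (T.toFlagTetra.f j) (T.toFlagTetra.f l) =
      (dot (T.toFlagTetra.f i) (T.toFlagTetra.x j) * dot (T.toFlagTetra.f j) (T.toFlagTetra.x l) * dot (T.toFlagTetra.f l) (T.toFlagTetra.x i)
      + dot (T.toFlagTetra.f i) (T.toFlagTetra.x l) * dot (T.toFlagTetra.f j) (T.toFlagTetra.x i) * dot (T.toFlagTetra.f l) (T.toFlagTetra.x j))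
      / det3 (T.toFlagTetra.x i) (T.toFlagTetra.x j) (T.toFlagTetra.x l) :=
    eq_div_of_mul_eq hDijl (key T.toFlagTetra i j l)
  have e2 : det3 (T.toFlagTetra.f i) (T.toFlagTetra.f j) (T.toFlagTetra.f k) =
      (dot (T.toFlagTetra.f i) (T.toFlagTetra.x j) * dot (T.toFlagTetra.f j) (T.toFlagTetra.x k) * dot (T.toFlagTetra.f k) (T.toFlagTetra.x i)
      + dot (T.toFlagTetra.f i) (T.toFlagTetra.x k) * dot (T.toFlagTetra.f j) (T.toFlagTetra.x i) * dot (T.toFlagTetra.f k) (T.toFlagTetra.x j))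
      / det3 (T.toFlagTetra.x i) (T.toFlagTetra.x j) (T.toFlagTetra.x k) :=
    eq_div_of_mul_eq hDijk (key T.toFlagTetra i j k)
  have e3 : det3 (T.toFlagTetra.f j) (T.toFlagTetra.f i) (T.toFlagTetra.f k) =
      (dot (T.toFlagTetra.f j) (T.toFlagTetra.x i) * dot (T.toFlagTetra.f i) (T.toFlagTetra.x k) * dot (T.toFlagTetra.f k) (T.toFlagTetra.x j)
      + dot (T.toFlagTetra.f j) (T.toFlagTetra.x k) * dot (T.toFlagTetra.f i) (T.toFlagTetra.x j) * dot (T.toFlagTetra.f k) (T.toFlagTetra.x i))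
      / det3 (T.toFlagTetra.x j) (T.toFlagTetra.x i) (T.toFlagTetra.x k) :=
    eq_div_of_mul_eq (by rw [det3_swap]; exact neg_ne_zero.2 hDijk) (key T.toFlagTetra j i k)
  have e4 : det3 (T.toFlagTetra.f j) (T.toFlagTetra.f i) (T.toFlagTetra.f l) =
      (dot (T.toFlagTetra.f j) (T.toFlagTetra.x i) * dot (T.toFlagTetra.f i) (T.toFlagTetra.x l) * dot (T.toFlagTetra.f l) (T.toFlagTetra.x j)
      + dot (T.toFlagTetra.f j) (T.toFlagTetra.x l) * dot (T.toFlagTetra.f i) (T.toFlagTetra.x j) * dot (T.toFlagTetra.f l) (T.toFlagTetra.x i))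
      / det3 (T.toFlagTetra.x j) (T.toFlagTetra.x i) (T.toFlagTetra.x l) :=
    eq_div_of_mul_eq (by rw [det3_swap]; exact neg_ne_zero.2 hDijl) (key T.toFlagTetra j i l)
  have hpki := T.generic_pairing k i hik.symm
  have hpkj := T.generic_pairing k j hjk.symm
  have hpli := T.generic_pairing l i hil.symm
  have hplj := T.generic_pairing l j hjl.symm
  have hpik := T.generic_pairing i k hik
  have hpil := T.generic_pairing i l hil
  have hpjk := T.generic_pairing j k hjk
  have hpjl := T.generic_pairing j l hjl
  have hpij := T.generic_pairing i j hij
  have hpji := T.generic_pairing j i hij.symm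
  have hS2 : (dot (T.toFlagTetra.f i) (T.toFlagTetra.x j) * dot (T.toFlagTetra.f j) (T.toFlagTetra.x k) * dot (T.toFlagTetra.f k) (T.toFlagTetra.x i)
      + dot (T.toFlagTetra.f i) (T.toFlagTetra.x k) * dot (T.toFlagTetra.f j) (T.toFlagTetra.x i) * dot (T.toFlagTetra.f k) (T.toFlagTetra.x j)) ≠ 0 := by
    rw [← key]; exact mul_ne_zero (T.generic_lines i j k hij hjk hik) hDijk
  have hS4 : (dot (T.toFlagTetra.f j) (T.toFlagTetra.x i) * dot (T.toFlagTetra.f i) (T.toFlagTetra.x l) * dot (T.toFlagTetra.f l) (T.toFlagTetra.x j)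
      + dot (T.toFlagTetra.f j) (T.toFlagTetra.x l) * dot (T.toFlagTetra.f i) (T.toFlagTetra.x j) * dot (T.toFlagTetra.f l) (T.toFlagTetra.x i)) ≠ 0 := by
    rw [← key]
    refine mul_ne_zero (T.generic_lines j i l hij.symm hil hjl) ?_
    rw [det3_swap]; exact neg_ne_zero.2 hDijl
  rw [zEdgeDual, zEdgeDual, zEdge, zEdge, e1, e2, e3, e4,
    det3_swap (T.toFlagTetra.x i) (T.toFlagTetra.x j) (T.toFlagTetra.x k),
    det3_swap (T.toFlagTetra.x i) (T.toFlagTetra.x j) (T.toFlagTetra.x l),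
    det3_swap (T.toFlagTetra.x k) (T.toFlagTetra.x l) (T.toFlagTetra.x i),
    det3_swap (T.toFlagTetra.x k) (T.toFlagTetra.x l) (T.toFlagTetra.x j)]
  field_simp
  rw [div_eq_one_iff_eq (by convert mul_ne_zero hS2 hS4 using 1; ring)]
  ring
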